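/- arXiv:2605.02020 — 2 statements merged into one kernel-verified Lean document; each statement's English description precedes it below -/
import Mathlib

section
/- Let δ > 0 and a > 0. Define g : (−a, ∞) → ℝ by g(s) = a^{−δ} − (s + a)^{−δ} and G(s) = ∫₀^s g(τ) dτ. Then for every r ≥ 1 and every s ≥ 0, G(r s) ≤ r² G(s). -/
/-- The translated singular nonlinearity `g(s) = a^{−δ} − (s + a)^{−δ}`. -/
noncomputable def singNonlin (δ a s : ℝ) : ℝ := a ^ (-δ) - (s + a) ^ (-δ)

/-- Its primitive `G(s) = ∫₀^s g(τ) dτ` vanishing at `0`. -/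
noncomputable def singPrimitive (δ a s : ℝ) : ℝ := ∫ τ in (0 : ℝ)..s, singNonlin δ a τ

open Set intervalIntegral in

lemma convexOn_rpow_neg (δ : ℝ) (hδ : 0 < δ) :
    ConvexOn ℝ (Set.Ioi (0:ℝ)) fun x : ℝ => x ^ (-δ) := by
  have hd1 : ∀ x ∈ Set.Ioi (0:ℝ), HasDerivAt (fun y : ℝ => y ^ (-δ))
      (-δ * x ^ (-δ - 1)) x := fun x hx =>
    Real.hasDerivAt_rpow_const (Or.inl (ne_of_gt hx))
  have hderiv : ∀ x ∈ Set.Ioi (0:ℝ),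
      deriv (fun y : ℝ => y ^ (-δ)) x = -δ * x ^ (-δ - 1) := fun x hx =>
    (hd1 x hx).deriv
  apply convexOn_of_deriv2_nonneg' (convex_Ioi 0)
  · intro x hx
    exact ((hd1 x hx).differentiableAt).differentiableWithinAt
  · intro x hx
    have he : deriv (fun y : ℝ => y ^ (-δ)) =ᶠ[nhds x]
        fun y : ℝ => -δ * y ^ (-δ - 1) := by
      filter_upwards [Ioi_mem_nhds hx] with y hy using hderiv y hy
    have hd2 : HasDerivAt (fun y : ℝ => -δ * y ^ (-δ - 1))
        (-δ * ((-δ - 1) * x ^ (-δ - 1 - 1))) x :=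
      (Real.hasDerivAt_rpow_const (p := -δ - 1) (Or.inl (ne_of_gt hx))).const_mul (-δ)
    exact (hd2.differentiableAt.congr_of_eventuallyEq he).differentiableWithinAt
  · intro x hx
    have he : deriv (fun y : ℝ => y ^ (-δ)) =ᶠ[nhds x]
        fun y : ℝ => -δ * y ^ (-δ - 1) := by
      filter_upwards [Ioi_mem_nhds hx] with y hy using hderiv y hy
    have hd2 : HasDerivAt (fun y : ℝ => -δ * y ^ (-δ - 1))
        (-δ * ((-δ - 1) * x ^ (-δ - 1 - 1))) x :=
      (Real.hasDerivAt_rpow_const (p := -δ - 1) (Or.inl (ne_of_gt hx))).const_mul (-δ)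
    have : deriv^[2] (fun y : ℝ => y ^ (-δ)) x
        = -δ * ((-δ - 1) * x ^ (-δ - 1 - 1)) := by
      simp only [Function.iterate_succ, Function.iterate_zero, Function.comp_apply, id]
      rw [Filter.EventuallyEq.deriv_eq he]
      exact hd2.deriv
    rw [this]
    have hxpos : (0:ℝ) < x := hx
    have h1 : (0:ℝ) ≤ x ^ (-δ - 1 - 1) := (Real.rpow_pos_of_pos hxpos _).le
    nlinarith [hδ.le, h1, mul_nonneg hδ.le h1]

/-- Pointwise inequality `g(rτ) ≤ r g(τ)` for `r ≥ 1`, `τ ≥ 0`. -/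
lemma singNonlin_scaling (δ a : ℝ) (hδ : 0 < δ) (ha : 0 < a)
    (r : ℝ) (hr : 1 ≤ r) (τ : ℝ) (hτ : 0 ≤ τ) :
    singNonlin δ a (r * τ) ≤ r * singNonlin δ a τ := by
  have hr0 : (0:ℝ) < r := lt_of_lt_of_le one_pos hr
  have hconv := convexOn_rpow_neg δ hδ
  have hx : r * τ + a ∈ Set.Ioi (0:ℝ) := by
    have : (0:ℝ) ≤ r * τ := mul_nonneg hr0.le hτ
    simpa using add_pos_of_nonneg_of_pos this ha
  have hy : a ∈ Set.Ioi (0:ℝ) := ha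
  have hw1 : (0:ℝ) ≤ 1 / r := by positivity
  have hw2 : (0:ℝ) ≤ 1 - 1 / r := by
    have : 1 / r ≤ 1 := by
      rw [div_le_one hr0]; exact hr
    linarith
  have hsum : 1 / r + (1 - 1 / r) = 1 := by ring
  have hkey := hconv.2 hx hy hw1 hw2 hsum
  have harg : (1 / r) • (r * τ + a) + (1 - 1 / r) • a = τ + a := by
    field_simp
    simp only [smul_eq_mul]
    rw [div_mul_eq_mul_div, div_mul_eq_mul_div, one_mul, ← add_div, div_eq_iff hr0.ne']
    ring
  rw [harg] at hkey
  simp only [smul_eq_mul] at hkey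
  -- hkey : (τ + a) ^ (-δ) ≤ (1/r) * (r*τ+a)^(-δ) + (1 - 1/r) * a^(-δ)
  unfold singNonlin
  have := mul_le_mul_of_nonneg_left hkey hr0.le
  have hrr : r * (1 / r * (r * τ + a) ^ (-δ) + (1 - 1 / r) * a ^ (-δ))
      = (r * τ + a) ^ (-δ) + (r - 1) * a ^ (-δ) := by
    field_simp
  rw [hrr] at this
  nlinarith [this]

open intervalIntegral in
/-- For every `r ≥ 1` and `s ≥ 0`, `G(rs) ≤ r² G(s)`. -/
theorem singPrimitive_scaling (δ a : ℝ) (hδ : 0 < δ) (ha : 0 < a) :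
    ∀ r : ℝ, 1 ≤ r → ∀ s : ℝ, 0 ≤ s →
      singPrimitive δ a (r * s) ≤ r ^ 2 * singPrimitive δ a s := by
  intro r hr s hs
  have hr0 : (0:ℝ) < r := lt_of_lt_of_le one_pos hr
  -- continuity of singNonlin on nonneg reals
  have hcont : ∀ c : ℝ, 0 < c → ContinuousOn (fun τ => singNonlin δ a (c * τ))
      (Set.Icc 0 s) := by
    intro c hc
    intro x hx
    have hxa : c * x + a ≠ 0 := by
      have : 0 ≤ c * x := mul_nonneg hc.le hx.1
      positivity
    have : ContinuousAt (fun τ : ℝ => singNonlin δ a (c * τ)) x := by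
      unfold singNonlin
      apply ContinuousAt.sub continuousAt_const
      exact ContinuousAt.rpow_const
        (((continuous_const.mul continuous_id).add continuous_const).continuousAt)
        (Or.inl hxa)
    exact this.continuousWithinAt
  have hint1 : IntervalIntegrable (fun τ => singNonlin δ a (r * τ))
      MeasureTheory.volume 0 s := by
    apply ContinuousOn.intervalIntegrable
    rw [Set.uIcc_of_le hs]
    exact hcont r hr0
  have hint2 : IntervalIntegrable (fun τ => r * singNonlin δ a τ)
      MeasureTheory.volume 0 s := by
    apply ContinuousOn.intervalIntegrable
    rw [Set.uIcc_of_le hs]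
    have := hcont 1 one_pos
    exact continuousOn_const.mul (by simpa using this)
  -- substitution
  have hsub : singPrimitive δ a (r * s) = r * ∫ τ in (0:ℝ)..s, singNonlin δ a (r * τ) := by
    unfold singPrimitive
    have := smul_integral_comp_mul_left (f := singNonlin δ a) (a := (0:ℝ)) (b := s) r
    rw [mul_zero] at this
    rw [← this, smul_eq_mul]
  rw [hsub]
  have hmono : (∫ τ in (0:ℝ)..s, singNonlin δ a (r * τ))
      ≤ ∫ τ in (0:ℝ)..s, r * singNonlin δ a τ := by
    apply integral_mono_on hs hint1 hint2
    intro x hx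
    exact singNonlin_scaling δ a hδ ha r hr x hx.1
  calc r * ∫ τ in (0:ℝ)..s, singNonlin δ a (r * τ)
      ≤ r * ∫ τ in (0:ℝ)..s, r * singNonlin δ a τ :=
        mul_le_mul_of_nonneg_left hmono hr0.le
    _ = r ^ 2 * singPrimitive δ a s := by
        rw [integral_const_mul]
        unfold singPrimitive
        ring
end

section
/- Let q > 2 be a real number and let M > 0. Then there exists a constant β > 0 such that for all real numbers r, s with 0 ≤ r ≤ M and s ≥ 1, (r + s)^q / q − r^q / q − r^{q−1} s ≥ s^q / q + β · r s^{q−1} / (q − 1). In particular this holds for the critical Grushin exponent q = 2*_γ = 2Q/(Q−2) with Q = m + (1+γ)n, γ > 0, n, m ≥ 1. -/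
/-- Tangent line inequality for `rpow`. -/
lemma tangent_rpow (p x h : ℝ) (hp : 1 ≤ p) (hx : 0 < x) (hh : 0 ≤ h) :
    x ^ p + p * x ^ (p - 1) * h ≤ (x + h) ^ p := by
  have hdx : -1 ≤ h / x := by nlinarith [div_nonneg hh hx.le]
  have hb : 1 + p * (h / x) ≤ (1 + h / x) ^ p :=
    one_add_mul_self_le_rpow_one_add hdx hp
  have hxp : (0:ℝ) < x ^ p := Real.rpow_pos_of_pos hx p
  have hsplit : (x + h) ^ p = x ^ p * (1 + h / x) ^ p := by
    rw [← Real.mul_rpow hx.le (by positivity)]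
    congr 1
    field_simp
  have hps : x ^ (p - 1) = x ^ p / x := Real.rpow_sub_one hx.ne' p
  calc x ^ p + p * x ^ (p - 1) * h = x ^ p * (1 + p * (h / x)) := by
        rw [hps]; field_simp
    _ ≤ x ^ p * (1 + h / x) ^ p := mul_le_mul_of_nonneg_left hb hxp.le
    _ = (x + h) ^ p := hsplit.symm

/-- Region 1: `r ≤ t0 * s`. -/
lemma region1_rpow (q t0 : ℝ) (hq : 2 < q) (ht0 : 0 < t0) (ht01 : t0 ≤ 1)
    (ht0q : t0 ^ (q - 2) ≤ q / (2 * (q + 1))) (r s : ℝ) (hr : 0 < r)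
    (hrs : r ≤ t0 * s) (hs : 1 ≤ s) :
    s ^ q + r ^ q + q * (r ^ (q - 1) * s) + (q / 2) * (r * s ^ (q - 1)) ≤ (r + s) ^ q := by
  have hs0 : (0:ℝ) < s := lt_of_lt_of_le one_pos hs
  have hq0 : (0:ℝ) < q := by linarith
  have hX : (0:ℝ) ≤ r * s ^ (q - 1) := by positivity
  -- r^(q-2) ≤ t0^(q-2) * s^(q-2)
  have h1 : r ^ (q - 2) ≤ t0 ^ (q - 2) * s ^ (q - 2) := by
    calc r ^ (q - 2) ≤ (t0 * s) ^ (q - 2) :=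
          Real.rpow_le_rpow hr.le hrs (by linarith)
      _ = t0 ^ (q - 2) * s ^ (q - 2) := Real.mul_rpow ht0.le hs0.le
  -- r^(q-1) ≤ t0^(q-2) * s^(q-1)
  have h1' : r ^ (q - 1) ≤ t0 ^ (q - 2) * s ^ (q - 1) := by
    have ha : r ^ (q - 1) ≤ (t0 * s) ^ (q - 1) :=
      Real.rpow_le_rpow hr.le hrs (by linarith)
    have hb : (t0 * s) ^ (q - 1) = t0 ^ (q - 1) * s ^ (q - 1) := Real.mul_rpow ht0.le hs0.le
    have hc : t0 ^ (q - 1) ≤ t0 ^ (q - 2) :=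
      Real.rpow_le_rpow_of_exponent_ge ht0 ht01 (by linarith)
    have hd : (0:ℝ) ≤ s ^ (q - 1) := by positivity
    calc r ^ (q - 1) ≤ t0 ^ (q - 1) * s ^ (q - 1) := by rw [← hb]; exact ha
      _ ≤ t0 ^ (q - 2) * s ^ (q - 1) := mul_le_mul_of_nonneg_right hc hd
  -- r^q ≤ t0^(q-2) * (r * s^(q-1))
  have h3 : r ^ q ≤ t0 ^ (q - 2) * (r * s ^ (q - 1)) := by
    have he : r ^ q = r ^ (q - 1) * r := by
      rw [← Real.rpow_add_one hr.ne' (q - 1)]; congr 1; ring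
    rw [he]
    calc r ^ (q - 1) * r ≤ (t0 ^ (q - 2) * s ^ (q - 1)) * r :=
          mul_le_mul_of_nonneg_right h1' hr.le
      _ = t0 ^ (q - 2) * (r * s ^ (q - 1)) := by ring
  -- r^(q-1) * s ≤ t0^(q-2) * (r * s^(q-1))
  have h4 : r ^ (q - 1) * s ≤ t0 ^ (q - 2) * (r * s ^ (q - 1)) := by
    have he : r ^ (q - 1) = r ^ (q - 2) * r := by
      rw [← Real.rpow_add_one hr.ne' (q - 2)]; congr 1; ring
    have hf : s ^ (q - 2) * s = s ^ (q - 1) := by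
      rw [← Real.rpow_add_one hs0.ne' (q - 2)]; congr 1; ring
    calc r ^ (q - 1) * s = (r ^ (q - 2) * r) * s := by rw [he]
      _ ≤ ((t0 ^ (q - 2) * s ^ (q - 2)) * r) * s := by
          have := mul_le_mul_of_nonneg_right h1 hr.le
          nlinarith [this, hs0.le]
      _ = t0 ^ (q - 2) * (r * (s ^ (q - 2) * s)) := by ring
      _ = t0 ^ (q - 2) * (r * s ^ (q - 1)) := by rw [hf]
  -- tangent at s
  have htan : s ^ q + q * s ^ (q - 1) * r ≤ (s + r) ^ q :=
    tangent_rpow q s r (by linarith) hs0 hr.le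
  have hsum : r ^ q + q * (r ^ (q - 1) * s) ≤ (1 + q) * (t0 ^ (q - 2) * (r * s ^ (q - 1))) := by
    have := mul_le_mul_of_nonneg_left h4 hq0.le
    nlinarith [h3]
  have hcap : (1 + q) * (t0 ^ (q - 2) * (r * s ^ (q - 1))) ≤ (q / 2) * (r * s ^ (q - 1)) := by
    have h5 : t0 ^ (q - 2) * (r * s ^ (q - 1)) ≤ (q / (2 * (q + 1))) * (r * s ^ (q - 1)) :=
      mul_le_mul_of_nonneg_right ht0q hX
    have h6 : (1 + q) * ((q / (2 * (q + 1))) * (r * s ^ (q - 1))) = (q / 2) * (r * s ^ (q - 1)) := by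
      field_simp
      ring
    nlinarith [h5]
  have hcomm : (r + s) ^ q = (s + r) ^ q := by rw [add_comm]
  nlinarith [htan, hsum, hcap]

/-- Monotonicity of `x ↦ (x+s)^q - x^q - q x^{q-1} s` on `[a, ∞)`, `a > 0`. -/
lemma mono_aux (q s a : ℝ) (hq : 2 < q) (hs : 0 ≤ s) (ha : 0 < a) :
    MonotoneOn (fun x : ℝ => (x + s) ^ q - x ^ q - q * (x ^ (q - 1) * s)) (Set.Ici a) := by
  have hd : ∀ x : ℝ, 0 < x →
      HasDerivAt (fun x : ℝ => (x + s) ^ q - x ^ q - q * (x ^ (q - 1) * s))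
        (q * (x + s) ^ (q - 1) - q * x ^ (q - 1) - q * ((q - 1) * x ^ (q - 2)) * s) x := by
    intro x hx
    have hxs : (0:ℝ) < x + s := by linarith
    have h1 : HasDerivAt (fun y : ℝ => (y + s) ^ q) (q * (x + s) ^ (q - 1)) x := by
      have := (Real.hasDerivAt_rpow_const (x := x + s) (p := q)
        (Or.inl hxs.ne')).comp x ((hasDerivAt_id x).add_const s)
      rw [show q * (x + s) ^ (q - 1) = q * (x + s) ^ (q - 1) * 1 by ring]; exact this
    have h2 : HasDerivAt (fun y : ℝ => y ^ q) (q * x ^ (q - 1)) x :=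
      Real.hasDerivAt_rpow_const (Or.inl hx.ne')
    have h3 : HasDerivAt (fun y : ℝ => q * (y ^ (q - 1) * s))
        (q * ((q - 1) * x ^ (q - 2)) * s) x := by
      have h3' : HasDerivAt (fun y : ℝ => y ^ (q - 1)) ((q - 1) * x ^ (q - 1 - 1)) x :=
        Real.hasDerivAt_rpow_const (Or.inl hx.ne')
      have he : q - 1 - 1 = q - 2 := by ring
      rw [he] at h3'
      have := (h3'.mul_const s).const_mul q
      convert this using 1
      exacts [rfl, rfl, by ring]
    exact (h1.sub h2).sub h3
  apply monotoneOn_of_deriv_nonneg (convex_Ici a)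
  · intro x hx
    have hx0 : 0 < x := lt_of_lt_of_le ha hx
    exact (hd x hx0).continuousAt.continuousWithinAt
  · intro x hx
    rw [interior_Ici] at hx
    exact ((hd x (lt_trans ha hx)).differentiableAt).differentiableWithinAt
  · intro x hx
    rw [interior_Ici] at hx
    have hx0 : 0 < x := lt_trans ha hx
    rw [(hd x hx0).deriv]
    have htan : x ^ (q - 1) + (q - 1) * x ^ (q - 1 - 1) * s ≤ (x + s) ^ (q - 1) :=
      tangent_rpow (q - 1) x s (by linarith) hx0 hs
    have he : q - 1 - 1 = q - 2 := by ring
    rw [he] at htan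
    nlinarith [htan]

/-- For a real exponent `q > 2` and `M > 0` there is `β > 0` such that for `0 ≤ r ≤ M` and
`s ≥ 1`: `(r + s)^q / q − r^q / q − r^{q−1} s ≥ s^q / q + β r s^{q−1} / (q − 1)`.
In particular this applies to the critical Grushin exponent `q = 2Q/(Q−2) > 2`. -/
theorem convex_power_increment_refined (q M : ℝ) (hq : 2 < q) (hM : 0 < M) :
    ∃ β : ℝ, 0 < β ∧ ∀ r s : ℝ, 0 ≤ r → r ≤ M → 1 ≤ s →
      s ^ q / q + β * (r * s ^ (q - 1)) / (q - 1)
        ≤ (r + s) ^ q / q - r ^ q / q - r ^ (q - 1) * s := by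
  have hq0 : (0:ℝ) < q := by linarith
  have hq1 : (0:ℝ) < q - 1 := by linarith
  have hq2 : (0:ℝ) < q - 2 := by linarith
  set b : ℝ := q / (2 * (q + 1)) with hb_def
  have hb0 : 0 < b := by apply div_pos hq0; linarith
  have hb1 : b ≤ 1 := by
    rw [hb_def, div_le_one (by linarith)]; linarith
  set t0 : ℝ := b ^ (q - 2)⁻¹ with ht0_def
  have ht0 : 0 < t0 := Real.rpow_pos_of_pos hb0 _
  have ht01 : t0 ≤ 1 := Real.rpow_le_one hb0.le hb1 (by positivity)
  have ht0q : t0 ^ (q - 2) = b := by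
    rw [ht0_def, ← Real.rpow_mul hb0.le, inv_mul_cancel₀ hq2.ne', Real.rpow_one]
  set c : ℝ := min (q / 2) (q * t0 / (2 * M)) with hc_def
  have hc : 0 < c := lt_min (by linarith) (by positivity)
  have key : ∀ r s : ℝ, 0 ≤ r → r ≤ M → 1 ≤ s →
      s ^ q + r ^ q + q * (r ^ (q - 1) * s) + c * (r * s ^ (q - 1)) ≤ (r + s) ^ q := by
    intro r s hr hrM hs
    have hs0 : (0:ℝ) < s := lt_of_lt_of_le one_pos hs
    rcases hr.eq_or_lt with h0 | hr0
    · rw [← h0]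
      rw [Real.zero_rpow hq0.ne', Real.zero_rpow hq1.ne']
      simp
    · rcases le_total r (t0 * s) with hcase | hcase
      · have hreg := region1_rpow q t0 hq ht0 ht01 (le_of_eq ht0q) r s hr0 hcase hs
        have hX : (0:ℝ) ≤ r * s ^ (q - 1) := by positivity
        have : c * (r * s ^ (q - 1)) ≤ (q / 2) * (r * s ^ (q - 1)) :=
          mul_le_mul_of_nonneg_right (min_le_left _ _) hX
        linarith
      · -- region 2: t0 * s ≤ r
        have hts : 0 < t0 * s := by positivity
        have hmem1 : t0 * s ∈ Set.Ici (t0 * s) := Set.self_mem_Ici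
        have hmem2 : r ∈ Set.Ici (t0 * s) := hcase
        have hmono := mono_aux q s (t0 * s) hq hs0.le hts hmem1 hmem2 hcase
        simp only at hmono
        have hreg := region1_rpow q t0 hq ht0 ht01 (le_of_eq ht0q) (t0 * s) s hts le_rfl hs
        have hss : s ^ (q - 1) * s = s ^ q := by
          rw [← Real.rpow_add_one hs0.ne' (q - 1)]; congr 1; ring
        have hts_eq : (t0 * s) * s ^ (q - 1) = t0 * s ^ q := by
          rw [← hss]; ring
        -- bound the c-term
        have hs_le : s ^ (q - 1) ≤ s ^ q :=
          Real.rpow_le_rpow_of_exponent_le hs (by linarith)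
        have hXle : r * s ^ (q - 1) ≤ M * s ^ q :=
          mul_le_mul hrM hs_le (by positivity) hM.le
        have hcle : c ≤ q * t0 / (2 * M) := min_le_right _ _
        have hcterm : c * (r * s ^ (q - 1)) ≤ (q / 2) * (t0 * s ^ q) := by
          calc c * (r * s ^ (q - 1)) ≤ (q * t0 / (2 * M)) * (M * s ^ q) := by
                apply mul_le_mul hcle hXle (by positivity) (by positivity)
            _ = (q / 2) * (t0 * s ^ q) := by field_simp
        rw [hts_eq] at hreg
        nlinarith [hmono, hreg, hcterm]
  refine ⟨c * (q - 1) / q, by positivity, fun r s hr hrM hs => ?_⟩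
  have hkey := key r s hr hrM hs
  have hbrw : (c * (q - 1) / q) * (r * s ^ (q - 1)) / (q - 1) = c * (r * s ^ (q - 1)) / q := by
    field_simp
  rw [hbrw]
  have h2 : (s ^ q + r ^ q + q * (r ^ (q - 1) * s) + c * (r * s ^ (q - 1))) / q
      ≤ (r + s) ^ q / q := by
    exact div_le_div_of_nonneg_right hkey hq0.le
  have h3 : (s ^ q + r ^ q + q * (r ^ (q - 1) * s) + c * (r * s ^ (q - 1))) / q
      = s ^ q / q + r ^ q / q + r ^ (q - 1) * s + c * (r * s ^ (q - 1)) / q := by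
    field_simp
  linarith [h2, h3.symm.le, h3.le]
end
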